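/- In the plane (d = 2), no line simultaneously intersects all three open regions S_1 = {x < 0 ∧ y > 0 ∧ x + y < 1}, S_2 = {x > 0 ∧ y < 0 ∧ x + y < 1}, and S_3 = {x > 0 ∧ y > 0 ∧ x + y > 1}. -/
import Mathlib

/-- A line in `ℝ²`: a nonempty affine subspace of dimension `1`. -/
def IsLine (f : AffineSubspace ℝ (EuclideanSpace ℝ (Fin 2))) : Prop :=
  (f : Set (EuclideanSpace ℝ (Fin 2))).Nonempty ∧ Module.finrank ℝ f.direction = 1

theorem stmt_3 (f : AffineSubspace ℝ (EuclideanSpace ℝ (Fin 2))) (hf : IsLine f) :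
    ¬ ((∃ x ∈ (f : Set (EuclideanSpace ℝ (Fin 2))), x 0 < 0 ∧ 0 < x 1 ∧ x 0 + x 1 < 1) ∧
       (∃ x ∈ (f : Set (EuclideanSpace ℝ (Fin 2))), 0 < x 0 ∧ x 1 < 0 ∧ x 0 + x 1 < 1) ∧
       (∃ x ∈ (f : Set (EuclideanSpace ℝ (Fin 2))), 0 < x 0 ∧ 0 < x 1 ∧ 1 < x 0 + x 1)) := by
  rintro ⟨⟨a, ha, ha1, ha2, ha3⟩, ⟨b, hb, hb1, hb2, hb3⟩, ⟨c, hc, hc1, hc2, hc3⟩⟩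
  have hcol : Collinear ℝ ({a, b, c} : Set (EuclideanSpace ℝ (Fin 2))) := by
    have hc' : Collinear ℝ (f : Set (EuclideanSpace ℝ (Fin 2))) := by
      rw [collinear_iff_rank_le_one, ← f.direction_eq_vectorSpan,
        ← Module.finrank_eq_rank, hf.2]
      norm_num
    exact hc'.subset (by
      intro x hx
      rcases hx with rfl | rfl | rfl <;> assumption)
  have key : ∀ (x y z : EuclideanSpace ℝ (Fin 2)), Wbtw ℝ x y z →
      ∃ t : ℝ, 0 ≤ t ∧ t ≤ 1 ∧ ∀ i : Fin 2, y i = (1 - t) * x i + t * z i := by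
    rintro x y z ⟨t, ⟨ht0, ht1⟩, rfl⟩
    refine ⟨t, ht0, ht1, fun i => ?_⟩
    simp [AffineMap.lineMap_apply, EuclideanSpace]
    ring
  rcases hcol.wbtw_or_wbtw_or_wbtw with h | h | h
  · obtain ⟨t, ht0, ht1, he⟩ := key a b c h
    have := he 1
    nlinarith
  · obtain ⟨t, ht0, ht1, he⟩ := key b c a h
    have h0 := he 0
    have h1 := he 1
    nlinarith
  · obtain ⟨t, ht0, ht1, he⟩ := key c a b h
    have := he 0
    nlinarith
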